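/- Let (W, Pl, π) be a plausibility structure in which Pl is ranked (totally preordered with Pl(A ∪ B) = max(Pl(A), Pl(B))), every world's valuation is propositionally consistent, and Pl(⟦φ⟧) > ⊥ for every consistent formula φ. Define K = {φ : true ↝ φ holds} and K ∘ φ = {ψ : φ ↝ ψ holds} (using the conditional semantics). Then the operator ∘ applied to K satisfies the AGM postulates R1–R8. -/

import Mathlib

/-- Propositional formulas over atoms of type `α`. -/
inductive Form (α : Type) : Type
  | atom : α → Form α
  | fls : Form α
  | neg : Form α → Form α
  | conj : Form α → Form α → Form α
  | disj : Form α → Form α → Form α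
  | impl : Form α → Form α → Form α

/-- Truth-value of a formula under a valuation. -/
def Form.eval {α : Type} (v : α → Bool) : Form α → Bool
  | .atom a => v a
  | .fls => false
  | .neg φ => !(Form.eval v φ)
  | .conj φ ψ => Form.eval v φ && Form.eval v ψ
  | .disj φ ψ => Form.eval v φ || Form.eval v ψ
  | .impl φ ψ => !(Form.eval v φ) || Form.eval v ψ

/-- The set of worlds (under world-valuation `π`) satisfying `φ`. -/
def truthSet {W α : Type} (π : W → α → Bool) (φ : Form α) : Set W :=
  {w | Form.eval (π w) φ = true}

/-- Propositional validity. -/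
def Taut {α : Type} (φ : Form α) : Prop := ∀ v : α → Bool, Form.eval v φ = true

/-- Propositional consequence. -/
def entails {α : Type} (Γ : Set (Form α)) (φ : Form α) : Prop :=
  ∀ v : α → Bool, (∀ γ ∈ Γ, Form.eval v γ = true) → Form.eval v φ = true

/-- Deductive closure. -/
def Cl {α : Type} (Γ : Set (Form α)) : Set (Form α) := {φ | entails Γ φ}

/-- The conditional `φ ↝ ψ`: `Pl ⟦φ⟧ = ⊥` or `Pl ⟦φ ∧ ψ⟧ > Pl ⟦φ ∧ ¬ψ⟧`. -/
def Cond {W α D : Type} [PartialOrder D] [OrderBot D]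
    (Pl : Set W → D) (π : W → α → Bool) (φ ψ : Form α) : Prop :=
  Pl (truthSet π φ) = ⊥ ∨
    Pl (truthSet π (φ.conj ψ.neg)) < Pl (truthSet π (φ.conj ψ))

/-- Satisfaction of `φ ↝ ψ` in a preferential structure (Lewis/Boutilier style). -/
def PrefSat {W α : Type} (prec : W → W → Prop) (π : W → α → Bool)
    (φ ψ : Form α) : Prop :=
  ∀ w₁ ∈ truthSet π φ, ∃ w₂, (prec w₂ w₁ ∨ w₂ = w₁) ∧
    w₂ ∈ truthSet π (φ.conj ψ) ∧
    ∀ w₃, prec w₃ w₂ → w₃ ∈ truthSet π (φ.impl ψ)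

/-- Katsuno–Mendelzon minimization: worlds in `B` closest to some world of `A`. -/
def minU {W D : Type} [PartialOrder D] (d : W → W → D) (A B : Set W) : Set W :=
  {w | w ∈ B ∧ ∃ w₀ ∈ A, ∀ w' ∈ B, ¬ d w₀ w' < d w₀ w}


def atomList {α : Type} : Form α → List α
  | .atom a => [a]
  | .fls => []
  | .neg φ => atomList φ
  | .conj φ ψ => atomList φ ++ atomList ψ
  | .disj φ ψ => atomList φ ++ atomList ψ
  | .impl φ ψ => atomList φ ++ atomList ψ

lemma eval_congr {α : Type} {v v' : α → Bool} (φ : Form α)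
    (h : ∀ a ∈ atomList φ, v a = v' a) : Form.eval v φ = Form.eval v' φ := by
  induction φ with
  | atom a => exact h a (by simp [atomList])
  | fls => rfl
  | neg φ ih => simp only [Form.eval]; rw [ih (fun a ha => h a (by simpa [atomList] using ha))]
  | conj φ ψ ih1 ih2 =>
      simp only [Form.eval]
      rw [ih1 (fun a ha => h a (by simp [atomList, ha])),
        ih2 (fun a ha => h a (by simp [atomList, ha]))]
  | disj φ ψ ih1 ih2 =>
      simp only [Form.eval]
      rw [ih1 (fun a ha => h a (by simp [atomList, ha])),
        ih2 (fun a ha => h a (by simp [atomList, ha]))]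
  | impl φ ψ ih1 ih2 =>
      simp only [Form.eval]
      rw [ih1 (fun a ha => h a (by simp [atomList, ha])),
        ih2 (fun a ha => h a (by simp [atomList, ha]))]

lemma compactness {α : Type} (Γ : Set (Form α))
    (h : ∀ L : List (Form α), (∀ γ ∈ L, γ ∈ Γ) →
        ∃ v, ∀ γ ∈ L, Form.eval v γ = true) :
    ∃ v : α → Bool, ∀ γ ∈ Γ, Form.eval v γ = true := by
  classical
  let ι := Finset {γ : Form α // γ ∈ Γ}
  have hsat : ∀ T : ι, ∃ v, ∀ x ∈ T, Form.eval v x.val = true := by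
    intro T
    obtain ⟨v, hv⟩ := h (T.toList.map Subtype.val) (by
      intro γ hγ
      simp only [List.mem_map] at hγ
      obtain ⟨x, _, rfl⟩ := hγ
      exact x.property)
    exact ⟨v, fun x hx => hv x.val (List.mem_map_of_mem (Finset.mem_toList.mpr hx))⟩
  choose vT hvT using hsat
  haveI : Nonempty ι := ⟨∅⟩
  let U : Ultrafilter ι := Ultrafilter.of Filter.atTop
  have hUle : (U : Filter ι) ≤ Filter.atTop := Ultrafilter.of_le _
  let v : α → Bool := fun a => decide ({T : ι | vT T a = true} ∈ U)
  refine ⟨v, ?_⟩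
  intro γ hγ
  have hB : ∀ l : List α, {T : ι | ∀ a ∈ l, vT T a = v a} ∈ U := by
    intro l
    induction l with
    | nil =>
        refine Filter.mem_of_superset Filter.univ_mem ?_
        intro T _
        simp
    | cons a l ih =>
        have ha : {T : ι | vT T a = v a} ∈ U := by
          by_cases hmem : {T : ι | vT T a = true} ∈ U
          · have hva : v a = true := by simp [v, hmem]
            have he : {T : ι | vT T a = v a} = {T : ι | vT T a = true} := by rw [hva]
            rw [he]; exact hmem
          · have hva : v a = false := by simp [v, hmem]
            have he : {T : ι | vT T a = v a} = {T : ι | vT T a = true}ᶜ := by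
              rw [hva]; ext T; simp
            rw [he]; exact (Ultrafilter.compl_mem_iff_notMem).mpr hmem
        have := Filter.inter_mem ha ih
        refine Filter.mem_of_superset this ?_
        rintro T ⟨h1, h2⟩ b hb
        rcases List.mem_cons.mp hb with rfl | hb'
        · exact h1
        · exact h2 b hb'
  have hA : {T : ι | ⟨γ, hγ⟩ ∈ T} ∈ U :=
    hUle (Filter.mem_atTop_sets.mpr ⟨{⟨γ, hγ⟩}, fun T hT => Finset.singleton_subset_iff.mp hT⟩)
  obtain ⟨T, hTA, hTB⟩ := Filter.nonempty_of_mem (Filter.inter_mem hA (hB (atomList γ)))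
  have h1 : Form.eval (vT T) γ = true := hvT T ⟨γ, hγ⟩ hTA
  have h2 : Form.eval v γ = Form.eval (vT T) γ :=
    eval_congr γ (fun a ha => (hTB a ha).symm)
  rw [h2, h1]

section AGMAux

variable {W α D : Type} [PartialOrder D] [OrderBot D]

lemma ts_mono (π : W → α → Bool) {σ τ : Form α}
    (h : ∀ v, Form.eval v σ = true → Form.eval v τ = true) :
    truthSet π σ ⊆ truthSet π τ := fun w hw => h (π w) hw

lemma ts_congr (π : W → α → Bool) {σ τ : Form α}
    (h : ∀ v, Form.eval v σ = Form.eval v τ) :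
    truthSet π σ = truthSet π τ := Set.ext fun w => by
  simp only [truthSet, Set.mem_setOf_eq, h (π w)]

lemma ts_split (π : W → α → Bool) (σ γ : Form α) :
    truthSet π σ = truthSet π (σ.conj γ) ∪ truthSet π (σ.conj γ.neg) := by
  ext w
  simp only [truthSet, Set.mem_setOf_eq, Set.mem_union, Form.eval,
    Bool.and_eq_true, Bool.not_eq_true']
  cases h : Form.eval (π w) γ <;> simp

lemma p_split (Pl : Set W → D) (π : W → α → Bool)
    (hmax : ∀ A B : Set W, Pl (A ∪ B) = Pl A ∨ Pl (A ∪ B) = Pl B)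
    (σ γ : Form α) :
    Pl (truthSet π σ) = Pl (truthSet π (σ.conj γ)) ∨
      Pl (truthSet π σ) = Pl (truthSet π (σ.conj γ.neg)) := by
  rw [ts_split π σ γ]; exact hmax _ _

lemma union_bound (Pl : Set W → D) (π : W → α → Bool)
    (hempty : Pl (∅ : Set W) = ⊥)
    (A1 : ∀ A B : Set W, A ⊆ B → Pl A ≤ Pl B)
    (hmax : ∀ A B : Set W, Pl (A ∪ B) = Pl A ∨ Pl (A ∪ B) = Pl B)
    {φ : Form α} (hbot : ⊥ < Pl (truthSet π φ)) (Q : Form α → Prop) :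
    ∀ L : List (Form α),
      (∀ γ ∈ L, Q γ → Pl (truthSet π (φ.conj γ.neg)) < Pl (truthSet π φ)) →
      Pl {w | Form.eval (π w) φ = true ∧ ∃ γ ∈ L, Q γ ∧ Form.eval (π w) γ = false}
        < Pl (truthSet π φ) := by
  intro L
  induction L with
  | nil =>
      intro _
      have he : {w | Form.eval (π w) φ = true ∧
          ∃ γ ∈ ([] : List (Form α)), Q γ ∧ Form.eval (π w) γ = false} = (∅ : Set W) := by
        ext w; simp
      rw [he, hempty]; exact hbot
  | cons γ L ih =>
      intro hL
      have hset : {w | Form.eval (π w) φ = true ∧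
            ∃ δ ∈ γ :: L, Q δ ∧ Form.eval (π w) δ = false}
          = {w | Form.eval (π w) φ = true ∧ Q γ ∧ Form.eval (π w) γ = false}
            ∪ {w | Form.eval (π w) φ = true ∧ ∃ δ ∈ L, Q δ ∧ Form.eval (π w) δ = false} := by
        ext w
        simp only [List.mem_cons, Set.mem_union, Set.mem_setOf_eq]
        constructor
        · rintro ⟨hφ, δ, (rfl | hδ), hQ, hf⟩
          · exact Or.inl ⟨hφ, hQ, hf⟩
          · exact Or.inr ⟨hφ, δ, hδ, hQ, hf⟩
        · rintro (⟨hφ, hQ, hf⟩ | ⟨hφ, δ, hδ, hQ, hf⟩)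
          · exact ⟨hφ, γ, Or.inl rfl, hQ, hf⟩
          · exact ⟨hφ, δ, Or.inr hδ, hQ, hf⟩
      rw [hset]
      rcases hmax {w | Form.eval (π w) φ = true ∧ Q γ ∧ Form.eval (π w) γ = false}
        {w | Form.eval (π w) φ = true ∧ ∃ δ ∈ L, Q δ ∧ Form.eval (π w) δ = false} with h | h <;>
        rw [h]
      · by_cases hQ : Q γ
        · have he : {w | Form.eval (π w) φ = true ∧ Q γ ∧ Form.eval (π w) γ = false}
              = truthSet π (φ.conj γ.neg) := by
            ext w
            simp [truthSet, Form.eval, hQ, Bool.and_eq_true, Bool.not_eq_true']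
          rw [he]; exact hL γ (by simp) hQ
        · have he : {w | Form.eval (π w) φ = true ∧ Q γ ∧ Form.eval (π w) γ = false}
              = (∅ : Set W) := by
            ext w; simp [hQ]
          rw [he, hempty]; exact hbot
      · exact ih (fun δ hδ => hL δ (by simp [hδ]))

lemma exists_model (Pl : Set W → D) (π : W → α → Bool)
    (hempty : Pl (∅ : Set W) = ⊥)
    (A1 : ∀ A B : Set W, A ⊆ B → Pl A ≤ Pl B)
    (hmax : ∀ A B : Set W, Pl (A ∪ B) = Pl A ∨ Pl (A ∪ B) = Pl B)
    {φ χ₀ : Form α} (hbot : ⊥ < Pl (truthSet π φ))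
    (himp : ∀ v, Form.eval v χ₀ = true → Form.eval v φ = true)
    (heq : Pl (truthSet π χ₀) = Pl (truthSet π φ))
    (Γ : Set (Form α))
    (hΓ : ∀ γ ∈ Γ, Pl (truthSet π (φ.conj γ.neg)) < Pl (truthSet π φ)) :
    ∃ v, Form.eval v χ₀ = true ∧ ∀ γ ∈ Γ, Form.eval v γ = true := by
  have hfin : ∀ L : List (Form α), (∀ γ ∈ L, γ ∈ insert χ₀ Γ) →
      ∃ v, ∀ γ ∈ L, Form.eval v γ = true := by
    intro L hL
    by_contra hno
    push_neg at hno
    have hsub : truthSet π χ₀ ⊆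
        {w | Form.eval (π w) φ = true ∧ ∃ γ ∈ L, γ ∈ Γ ∧ Form.eval (π w) γ = false} := by
      intro w hw
      have hφ := himp (π w) hw
      obtain ⟨γ, hγL, hγf⟩ := hno (π w)
      rcases (by simpa using hL γ hγL : γ = χ₀ ∨ γ ∈ Γ) with rfl | hγΓ
      · exact absurd hw hγf
      · exact ⟨hφ, γ, hγL, hγΓ, by simpa using hγf⟩
    have hlt := union_bound Pl π hempty A1 hmax hbot (· ∈ Γ) L
      (fun δ _ hδ => hΓ δ hδ)
    exact absurd heq (ne_of_lt (lt_of_le_of_lt (A1 _ _ hsub) hlt))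
  obtain ⟨v, hv⟩ := compactness (insert χ₀ Γ) hfin
  exact ⟨v, hv χ₀ (Set.mem_insert _ _), fun γ hγ => hv γ (Set.mem_insert_of_mem _ hγ)⟩

end AGMAux

theorem stmt11 {W α D : Type} [PartialOrder D] [OrderBot D]
    (Pl : Set W → D) (π : W → α → Bool)
    (hempty : Pl (∅ : Set W) = ⊥)
    (A1 : ∀ A B : Set W, A ⊆ B → Pl A ≤ Pl B)
    (htot : ∀ A B : Set W, Pl A ≤ Pl B ∨ Pl B ≤ Pl A)
    (hmax : ∀ A B : Set W, Pl (A ∪ B) = Pl A ∨ Pl (A ∪ B) = Pl B)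
    (hpos : ∀ φ : Form α, (∃ v, Form.eval v φ = true) → ⊥ < Pl (truthSet π φ))
    (K : Set (Form α)) (hKdef : K = {ψ | Cond Pl π (Form.neg Form.fls) ψ})
    (rev : Form α → Set (Form α)) (hrev : ∀ φ, rev φ = {ψ | Cond Pl π φ ψ}) :
    (∀ φ, Cl (rev φ) = rev φ) ∧
    (∀ φ, φ ∈ rev φ) ∧
    (∀ φ, rev φ ⊆ Cl (K ∪ {φ})) ∧
    (∀ φ, Form.neg φ ∉ K → Cl (K ∪ {φ}) ⊆ rev φ) ∧
    (∀ φ, rev φ = Cl {Form.fls} ↔ Taut (Form.neg φ)) ∧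
    (∀ φ ψ, (∀ v, Form.eval v φ = Form.eval v ψ) → rev φ = rev ψ) ∧
    (∀ φ ψ, rev (φ.conj ψ) ⊆ Cl (rev φ ∪ {ψ})) ∧
    (∀ φ ψ, Form.neg ψ ∉ rev φ → Cl (rev φ ∪ {ψ}) ⊆ rev (φ.conj ψ)) := by 
  classical
  -- `Cond` characterization when the antecedent has nonbottom plausibility
  have condIff : ∀ φ γ : Form α, Pl (truthSet π φ) ≠ ⊥ →
      (Cond Pl π φ γ ↔ Pl (truthSet π (φ.conj γ.neg)) < Pl (truthSet π φ)) := by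
    intro φ γ hne
    constructor
    · rintro (h | h)
      · exact absurd h hne
      · exact lt_of_lt_of_le h (A1 _ _ (ts_mono π (fun v hv => by
          simp only [Form.eval, Bool.and_eq_true] at hv; exact hv.1)))
    · intro h
      right
      rcases p_split Pl π hmax φ γ with he | he
      · exact he ▸ h
      · rw [he] at h; exact absurd h (lt_irrefl _)
  -- R6
  have R6 : ∀ φ ψ, (∀ v, Form.eval v φ = Form.eval v ψ) → rev φ = rev ψ := by
    intro φ ψ h
    rw [hrev, hrev]
    ext χ
    simp only [Set.mem_setOf_eq, Cond]
    rw [ts_congr π h,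
      ts_congr π (σ := φ.conj χ.neg) (τ := ψ.conj χ.neg)
        (fun v => by simp only [Form.eval, h v]),
      ts_congr π (σ := φ.conj χ) (τ := ψ.conj χ)
        (fun v => by simp only [Form.eval, h v])]
  -- R2
  have R2 : ∀ φ, φ ∈ rev φ := by
    intro φ
    rw [hrev]
    by_cases hφ : Pl (truthSet π φ) = ⊥
    · exact Or.inl hφ
    · right
      have h0 : truthSet π (φ.conj φ.neg) = (∅ : Set W) := by
        ext w; simp [truthSet, Form.eval]
      have h1 : truthSet π (φ.conj φ) = truthSet π φ :=
        ts_congr π (fun v => by simp [Form.eval])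
      rw [h0, h1, hempty]
      exact bot_lt_iff_ne_bot.mpr hφ
  -- R7
  have R7 : ∀ φ ψ, rev (φ.conj ψ) ⊆ Cl (rev φ ∪ {ψ}) := by
    intro φ ψ χ hχ
    rw [hrev] at hχ
    have hδ : Cond Pl π φ (ψ.impl χ) := by
      rcases hχ with hb | hlt
      · by_cases hφ : Pl (truthSet π φ) = ⊥
        · exact Or.inl hφ
        · right
          have h0 : Pl (truthSet π (φ.conj (ψ.impl χ).neg)) = ⊥ := by
            have hle : Pl (truthSet π (φ.conj (ψ.impl χ).neg))
                ≤ Pl (truthSet π (φ.conj ψ)) := A1 _ _ (ts_mono π (fun v hv => by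
              simp only [Form.eval, Bool.and_eq_true, Bool.not_eq_true',
                Bool.or_eq_false_iff, Bool.not_eq_false] at hv ⊢
              exact ⟨hv.1, by simpa using hv.2.1⟩))
            rw [hb] at hle
            exact le_bot_iff.mp hle
          rw [h0]
          rcases p_split Pl π hmax φ (ψ.impl χ) with h | h
          · rw [← h]; exact bot_lt_iff_ne_bot.mpr hφ
          · exact absurd (h.trans h0) hφ
      · right
        calc Pl (truthSet π (φ.conj (ψ.impl χ).neg))
            = Pl (truthSet π ((φ.conj ψ).conj χ.neg)) := by
              rw [ts_congr π (σ := φ.conj (ψ.impl χ).neg) (τ := (φ.conj ψ).conj χ.neg)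
                (fun v => by
                  cases h1 : Form.eval v φ <;> cases h2 : Form.eval v ψ <;>
                    cases h3 : Form.eval v χ <;> simp [Form.eval, h1, h2, h3])]
          _ < Pl (truthSet π ((φ.conj ψ).conj χ)) := hlt
          _ ≤ Pl (truthSet π (φ.conj (ψ.impl χ))) := A1 _ _ (ts_mono π (fun v hv => by
              cases h1 : Form.eval v φ <;> cases h2 : Form.eval v ψ <;>
                cases h3 : Form.eval v χ <;> simp [Form.eval, h1, h2, h3] at hv ⊢))
    intro v hv
    have h1 : Form.eval v (ψ.impl χ) = true := hv _ (Or.inl (by rw [hrev]; exact hδ))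
    have h2 : Form.eval v ψ = true := hv ψ (Or.inr rfl)
    simp only [Form.eval, h2, Bool.not_true, Bool.false_or] at h1
    exact h1
  -- R8
  have R8 : ∀ φ ψ, Form.neg ψ ∉ rev φ → Cl (rev φ ∪ {ψ}) ⊆ rev (φ.conj ψ) := by
    intro φ ψ hns χ hχ
    rw [hrev] at hns ⊢
    simp only [Set.mem_setOf_eq] at hns ⊢
    rw [Cond, not_or] at hns
    obtain ⟨hφne, hnlt⟩ := hns
    have e1 : truthSet π (φ.conj ψ.neg.neg) = truthSet π (φ.conj ψ) :=
      ts_congr π (fun v => by simp [Form.eval])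
    rw [e1] at hnlt
    have hle : Pl (truthSet π (φ.conj ψ.neg)) ≤ Pl (truthSet π (φ.conj ψ)) := by
      rcases htot (truthSet π (φ.conj ψ.neg)) (truthSet π (φ.conj ψ)) with h | h
      · exact h
      · exact le_of_eq (h.lt_or_eq.resolve_left hnlt).symm
    have hkey : Pl (truthSet π (φ.conj ψ)) = Pl (truthSet π φ) := by
      rcases p_split Pl π hmax φ ψ with h | h
      · exact h.symm
      · exact le_antisymm
          (A1 _ _ (ts_mono π (fun v hv => by
            simp only [Form.eval, Bool.and_eq_true] at hv; exact hv.1)))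
          (by rw [h]; exact hle)
    have hψne : Pl (truthSet π (φ.conj ψ)) ≠ ⊥ := by rw [hkey]; exact hφne
    rw [condIff _ _ hψne]
    by_contra hc
    have hle2 : Pl (truthSet π ((φ.conj ψ).conj χ.neg)) ≤ Pl (truthSet π (φ.conj ψ)) :=
      A1 _ _ (ts_mono π (fun v hv => by
        simp only [Form.eval, Bool.and_eq_true] at hv ⊢; exact hv.1))
    have heq2 : Pl (truthSet π ((φ.conj ψ).conj χ.neg)) = Pl (truthSet π (φ.conj ψ)) :=
      hle2.lt_or_eq.resolve_left hc
    obtain ⟨v, hv0, hvΓ⟩ := exists_model Pl π hempty A1 hmax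
      (φ := φ) (χ₀ := (φ.conj ψ).conj χ.neg)
      (bot_lt_iff_ne_bot.mpr hφne)
      (fun v hv => by
        simp only [Form.eval, Bool.and_eq_true] at hv; exact hv.1.1)
      (heq2.trans hkey)
      {γ | Cond Pl π φ γ}
      (fun γ hγ => (condIff φ γ hφne).mp hγ)
    have hall : ∀ γ ∈ rev φ ∪ {ψ}, Form.eval v γ = true := by
      rintro γ (hγ | rfl)
      · exact hvΓ γ (by rwa [hrev] at hγ)
      · simp only [Form.eval, Bool.and_eq_true] at hv0
        exact hv0.1.2
    have := hχ v hall
    simp only [Form.eval, Bool.and_eq_true, Bool.not_eq_true'] at hv0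
    rw [this] at hv0
    exact absurd hv0.2 (by simp)
  -- relation between K and rev
  have hKrev : K = rev (Form.neg Form.fls) := by rw [hKdef, hrev]
  have ClMono : ∀ (Γ Γ' : Set (Form α)), Γ ⊆ Γ' → Cl Γ ⊆ Cl Γ' :=
    fun Γ Γ' h χ hχ v hv => hχ v (fun γ hγ => hv γ (h hγ))
  -- R1
  have R1 : ∀ φ, Cl (rev φ) = rev φ := by
    intro φ
    apply Set.Subset.antisymm
    · by_cases hφ : Pl (truthSet π φ) = ⊥
      · intro χ _
        rw [hrev]
        exact Or.inl hφ
      · have hT : Form.neg (Form.neg Form.fls) ∉ rev φ := by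
          rw [hrev]
          rintro (h | h)
          · exact hφ h
          · have h0 : truthSet π (φ.conj Form.fls.neg.neg) = (∅ : Set W) := by
              ext w; simp [truthSet, Form.eval]
            rw [h0, hempty] at h
            exact not_lt_bot h
        have step := R8 φ (Form.neg Form.fls) hT
        have e : rev (φ.conj (Form.neg Form.fls)) = rev φ :=
          R6 _ _ (fun v => by simp [Form.eval])
        intro χ hχ
        exact e ▸ step (ClMono _ _ Set.subset_union_left hχ)
    · intro χ hχ v hv
      exact hv χ hχ
  -- R3
  have R3 : ∀ φ, rev φ ⊆ Cl (K ∪ {φ}) := by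
    intro φ
    have e : rev φ = rev ((Form.neg Form.fls).conj φ) :=
      (R6 _ _ (fun v => by simp [Form.eval])).symm
    rw [e, hKrev]
    exact R7 _ φ
  -- R4
  have R4 : ∀ φ, Form.neg φ ∉ K → Cl (K ∪ {φ}) ⊆ rev φ := by
    intro φ h
    have e : rev ((Form.neg Form.fls).conj φ) = rev φ :=
      R6 _ _ (fun v => by simp [Form.eval])
    rw [hKrev] at h ⊢
    exact e ▸ R8 _ φ h
  -- R5
  have hClfls : Cl ({Form.fls} : Set (Form α)) = Set.univ := by
    ext χ
    simp only [Set.mem_univ, iff_true]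
    intro v hv
    have := hv Form.fls rfl
    simp [Form.eval] at this
  have R5 : ∀ φ, rev φ = Cl {Form.fls} ↔ Taut (Form.neg φ) := by
    intro φ
    constructor
    · intro h
      by_contra htaut
      have hsat : ∃ v, Form.eval v φ = true := by
        by_contra hs
        push_neg at hs
        exact htaut (fun v => by
          simp only [Form.eval, Bool.not_eq_true']
          exact Bool.eq_false_iff.mpr (hs v))
      have hfls : Form.fls ∈ rev φ := by
        rw [h, hClfls]; trivial
      rw [hrev] at hfls
      rcases hfls with hb | hlt
      · exact absurd hb (ne_of_gt (hpos φ hsat))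
      · have h0 : truthSet π (φ.conj Form.fls) = (∅ : Set W) := by
          ext w; simp [truthSet, Form.eval]
        rw [h0, hempty] at hlt
        exact not_lt_bot hlt
    · intro htaut
      have hts0 : truthSet π φ = (∅ : Set W) := by
        ext w
        simp only [truthSet, Set.mem_setOf_eq, Set.mem_empty_iff_false, iff_false]
        have := htaut (π w)
        simp only [Form.eval, Bool.not_eq_true'] at this
        simp [this]
      rw [hClfls]
      apply Set.eq_univ_of_forall
      intro χ
      rw [hrev]
      exact Or.inl (by rw [hts0]; exact hempty)
  exact ⟨R1, R2, R3, R4, R5, R6, R7, R8⟩
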